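/- Let (X, 𝒜, μ, T) be a measure preserving system and E ∈ 𝒜 with μ(E) > 0. Then there exists a positive integer n with n ≤ 2/μ(E) such that μ(E ∩ T^{-n}E) ≥ μ(E)²/2. -/
import Mathlib


open MeasureTheory

section QP_aux
open Finset

-- Bonferroni-type inequality, subtraction-free form in ℝ≥0∞
lemma bonferroni {X : Type*} [MeasurableSpace X] (μ : Measure X)
    (A : ℕ → Set X) (hA : ∀ i, MeasurableSet (A i)) (n : ℕ) :
    ∑ i ∈ range n, μ (A i) ≤
      μ (⋃ i ∈ range n, A i) + ∑ i ∈ range n, ∑ j ∈ range i, μ (A i ∩ A j) := by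
  induction n with
  | zero => simp
  | succ n ih =>
    rw [Finset.sum_range_succ, Finset.sum_range_succ]
    have hU : (⋃ i ∈ range (n+1), A i) = (⋃ i ∈ range n, A i) ∪ A n := by
      rw [Finset.range_add_one]
      simp [Set.biUnion_insert, Set.union_comm]
    have hmU : MeasurableSet (⋃ i ∈ range n, A i) :=
      MeasurableSet.biUnion (Finset.countable_toSet _) (fun i _ => hA i)
    have h1 : μ (⋃ i ∈ range n, A i) + μ (A n) =
        μ ((⋃ i ∈ range n, A i) ∪ A n) + μ ((⋃ i ∈ range n, A i) ∩ A n) :=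
      (measure_union_add_inter _ (hA n)).symm
    have h2 : μ ((⋃ i ∈ range n, A i) ∩ A n) ≤ ∑ j ∈ range n, μ (A n ∩ A j) := by
      calc μ ((⋃ i ∈ range n, A i) ∩ A n) = μ (⋃ j ∈ range n, A j ∩ A n) := by
            rw [Set.iUnion₂_inter]
        _ ≤ ∑ j ∈ range n, μ (A j ∩ A n) := measure_biUnion_finset_le _ _
        _ = ∑ j ∈ range n, μ (A n ∩ A j) := by simp [Set.inter_comm]
    calc (∑ i ∈ range n, μ (A i)) + μ (A n)
        ≤ (μ (⋃ i ∈ range n, A i) + ∑ i ∈ range n, ∑ j ∈ range i, μ (A i ∩ A j)) + μ (A n) := by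
          gcongr
      _ = (μ (⋃ i ∈ range n, A i) + μ (A n)) + ∑ i ∈ range n, ∑ j ∈ range i, μ (A i ∩ A j) := by
          ring
      _ = (μ ((⋃ i ∈ range n, A i) ∪ A n) + μ ((⋃ i ∈ range n, A i) ∩ A n))
            + ∑ i ∈ range n, ∑ j ∈ range i, μ (A i ∩ A j) := by rw [h1]
      _ ≤ (μ (⋃ i ∈ range (n+1), A i) + ∑ j ∈ range n, μ (A n ∩ A j))
            + ∑ i ∈ range n, ∑ j ∈ range i, μ (A i ∩ A j) := by
          rw [hU]; gcongr
      _ = μ (⋃ i ∈ range (n+1), A i)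
            + (∑ i ∈ range n, ∑ j ∈ range i, μ (A i ∩ A j) + ∑ j ∈ range n, μ (A n ∩ A j)) := by
          ring

end QP_aux

/-- Quantitative Poincaré recurrence: if `(X, μ, T)` is a measure preserving system and
`μ(E) > 0`, then for some `n ≤ 2/μ(E)` we have `μ(E ∩ T⁻ⁿE) ≥ μ(E)²/2`. -/
theorem quantitative_poincare {X : Type*} [MeasurableSpace X]
    (μ : Measure X) [IsProbabilityMeasure μ] (T : X → X)
    (hT : MeasurePreserving T μ μ) (E : Set X) (hE : MeasurableSet E)
    (hpos : 0 < μ E) :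
    ∃ n : ℕ, 0 < n ∧ (n : ℝ) ≤ 2 / (μ E).toReal ∧
      (μ E).toReal ^ 2 / 2 ≤ (μ (E ∩ (T^[n]) ⁻¹' E)).toReal := by
  by_contra hcon
  push_neg at hcon
  set a : ℝ := (μ E).toReal with ha
  have hEfin : μ E ≠ ⊤ := measure_ne_top μ E
  have ha0 : 0 < a := ENNReal.toReal_pos hpos.ne' hEfin
  have ha1 : a ≤ 1 := by
    rw [ha]
    exact ENNReal.toReal_le_of_le_ofReal one_pos.le (by simpa using prob_le_one)
  set N : ℕ := ⌊2 / a⌋₊ with hN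
  have hNle : (N : ℝ) ≤ 2 / a := Nat.floor_le (by positivity)
  have hNa : (N : ℝ) * a ≤ 2 := by
    rw [← le_div_iff₀ ha0] at *; exact hNle
  have hN1 : 2 < ((N : ℝ) + 1) * a := by
    have := Nat.lt_floor_add_one (2 / a)
    calc (2 : ℝ) = (2 / a) * a := by field_simp
      _ < ((N : ℝ) + 1) * a := by
        apply mul_lt_mul_of_pos_right _ ha0
        exact_mod_cast this
  have hN2 : 2 ≤ N := by
    have h2a : (2 : ℝ) ≤ 2 / a := by
      rw [le_div_iff₀ ha0]; linarith
    exact_mod_cast Nat.le_floor h2a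
  -- the sets
  set A : ℕ → Set X := fun i => (T^[i]) ⁻¹' E with hA
  have hAm : ∀ i, MeasurableSet (A i) := fun i => (hT.iterate i).measurable hE
  have hAμ : ∀ i, μ (A i) = μ E := fun i => (hT.iterate i).measure_preimage hE.nullMeasurableSet
  have hpair : ∀ i j : ℕ, j < i → μ (A i ∩ A j) = μ (E ∩ A (i - j)) := by
    intro i j hji
    have hij : i = (i - j) + j := (Nat.sub_add_cancel hji.le).symm
    have : A i ∩ A j = (T^[j]) ⁻¹' (A (i - j) ∩ E) := by
      rw [Set.preimage_inter, hA]
      simp only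
      rw [← Set.preimage_comp, ← Function.iterate_add T (i-j) j, ← hij]
    rw [this, (hT.iterate j).measure_preimage
      (((hAm (i-j)).inter hE).nullMeasurableSet), Set.inter_comm]
  -- each pairwise term is small
  have hsmall : ∀ i j : ℕ, j < i → i ≤ N → (μ (A i ∩ A j)).toReal < a ^ 2 / 2 := by
    intro i j hji hiN
    rw [hpair i j hji]
    apply hcon (i - j) (Nat.sub_pos_of_lt hji)
    calc ((i - j : ℕ) : ℝ) ≤ (i : ℕ) := by exact_mod_cast Nat.sub_le i j
      _ ≤ (N : ℝ) := by exact_mod_cast hiN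
      _ ≤ 2 / a := hNle
  -- Bonferroni
  have hbon := bonferroni μ A hAm (N + 1)
  have hsum1 : ∑ i ∈ Finset.range (N+1), μ (A i) = (N + 1) * μ E := by
    simp [hAμ, Finset.sum_const, mul_comm]
  have hfin : ∀ i j : ℕ, μ (A i ∩ A j) ≠ ⊤ := fun i j => measure_ne_top μ _
  -- convert to reals
  have hR : ((N : ℝ) + 1) * a ≤ 1 +
      ∑ i ∈ Finset.range (N+1), ∑ j ∈ Finset.range i, (μ (A i ∩ A j)).toReal := by
    have hrhs_ne : μ (⋃ i ∈ Finset.range (N+1), A i)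
        + ∑ i ∈ Finset.range (N+1), ∑ j ∈ Finset.range i, μ (A i ∩ A j) ≠ ⊤ := by
      apply ENNReal.add_ne_top.2
      refine ⟨measure_ne_top μ _, ?_⟩
      apply (ENNReal.sum_lt_top.2 ?_).ne
      intro i _
      exact ENNReal.sum_lt_top.2 fun j _ => (hfin i j).lt_top
    have hlhs_ne : ∑ i ∈ Finset.range (N+1), μ (A i) ≠ ⊤ := by
      rw [hsum1]; exact ENNReal.mul_ne_top (by simp) hEfin
    have := (ENNReal.toReal_le_toReal hlhs_ne hrhs_ne).2 hbon
    rw [hsum1, ENNReal.toReal_mul] at this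
    have hNr : (((N : ℕ) : ENNReal) + 1).toReal = (N : ℝ) + 1 := by
      rw [ENNReal.toReal_add (ENNReal.natCast_ne_top N) ENNReal.one_ne_top]; simp
    rw [hNr] at this
    have h1 : (μ (⋃ i ∈ Finset.range (N+1), A i)).toReal ≤ 1 := by
      exact ENNReal.toReal_le_of_le_ofReal one_pos.le (by simpa using prob_le_one)
    rw [ENNReal.toReal_add (measure_ne_top μ _) (by
        apply (ENNReal.sum_lt_top.2 ?_).ne
        intro i _
        exact ENNReal.sum_lt_top.2 fun j _ => (hfin i j).lt_top)] at this
    rw [ENNReal.toReal_sum (fun i _ => by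
        apply (ENNReal.sum_lt_top.2 fun j _ => (hfin i j).lt_top).ne)] at this
    simp_rw [ENNReal.toReal_sum (fun j _ => hfin _ j)] at this
    calc ((N : ℝ) + 1) * a
        ≤ (μ (⋃ i ∈ Finset.range (N+1), A i)).toReal +
          ∑ i ∈ Finset.range (N+1), ∑ j ∈ Finset.range i, (μ (A i ∩ A j)).toReal := this
      _ ≤ 1 + _ := by gcongr
  -- bound the double sum strictly
  have hdub : ∑ i ∈ Finset.range (N+1), ∑ j ∈ Finset.range i, (μ (A i ∩ A j)).toReal
      < ∑ i ∈ Finset.range (N+1), (i : ℝ) * (a ^ 2 / 2) := by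
    apply Finset.sum_lt_sum
    · intro i hi
      rw [Finset.mem_range] at hi
      calc ∑ j ∈ Finset.range i, (μ (A i ∩ A j)).toReal
          ≤ ∑ j ∈ Finset.range i, (a ^ 2 / 2) := by
            apply Finset.sum_le_sum
            intro j hj
            rw [Finset.mem_range] at hj
            exact (hsmall i j hj (Nat.lt_succ_iff.mp hi)).le
        _ = (i : ℝ) * (a ^ 2 / 2) := by simp [mul_comm]
    · refine ⟨1, Finset.mem_range.2 (by omega), ?_⟩
      have := hsmall 1 0 one_pos (by omega)
      simpa using this
  have hgauss : ∑ i ∈ Finset.range (N+1), (i : ℝ) * (a ^ 2 / 2)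
      = ((N : ℝ) * (N + 1) / 2) * (a ^ 2 / 2) := by
    rw [← Finset.sum_mul]
    congr 1
    have h2 : ((∑ i ∈ Finset.range (N+1), i : ℕ) : ℝ) * 2 = ((N : ℝ) + 1) * N := by
      have := Finset.sum_range_id_mul_two (N+1)
      have := congrArg (fun k : ℕ => (k : ℝ)) this
      push_cast at this
      simpa using this
    push_cast at h2 ⊢
    linarith
  rw [hgauss] at hdub
  nlinarith [mul_nonneg (Nat.cast_nonneg N : (0:ℝ) ≤ N) ha0.le, sq_nonneg a,
    mul_nonneg (mul_nonneg (Nat.cast_nonneg N : (0:ℝ) ≤ N) ha0.le) ha0.le]
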